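/- Let P = |0_L⟩⟨0_L| + |1_L⟩⟨1_L| be the projector onto the span of |0_L⟩ = (|0000⟩+|1111⟩)/√2 and |1_L⟩ = (|1100⟩+|0011⟩)/√2 in (ℂ²)^{⊗4}, and let E be the single-qubit channel with Kraus operators E₀ = [[1,0],[0,f]], E₁ = [[0,√(1−|f|²)],[0,0]] for f = |f|e^{iΘ}. Then the 16×16 matrix E^{⊗4}(P), written in the computational basis, is diagonal except for the four entries coupling |0000⟩↔|1111⟩ and |1100⟩↔|0011⟩; moreover the off-diagonal entry ⟨0000| E^{⊗4}(P) |1111⟩ equals e^{−4iΘ} times a nonnegative real function of |f|, and ⟨1100| E^{⊗4}(P) |0011⟩ is a real function of |f| independent of Θ. -/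
import Mathlib


open Matrix ComplexConjugate

/-- Index set for the computational basis of four qubits. -/
abbrev Q4 : Type := Fin 2 × Fin 2 × Fin 2 × Fin 2

/-- The codeword `|0_L⟩ = (|0000⟩+|1111⟩)/√2` as a vector. -/
noncomputable def v0L : Q4 → ℂ := fun p =>
  ((Real.sqrt 2 : ℂ))⁻¹ *
    ((if p = ((0 : Fin 2), (0 : Fin 2), (0 : Fin 2), (0 : Fin 2)) then 1 else 0) +
     (if p = ((1 : Fin 2), (1 : Fin 2), (1 : Fin 2), (1 : Fin 2)) then 1 else 0))

/-- The codeword `|1_L⟩ = (|1100⟩+|0011⟩)/√2` as a vector. -/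
noncomputable def v1L : Q4 → ℂ := fun p =>
  ((Real.sqrt 2 : ℂ))⁻¹ *
    ((if p = ((1 : Fin 2), (1 : Fin 2), (0 : Fin 2), (0 : Fin 2)) then 1 else 0) +
     (if p = ((0 : Fin 2), (0 : Fin 2), (1 : Fin 2), (1 : Fin 2)) then 1 else 0))

/-- The projector `P = |0_L⟩⟨0_L| + |1_L⟩⟨1_L|` onto the four-qubit code. -/
noncomputable def projP : Matrix Q4 Q4 ℂ :=
  fun p q => v0L p * conj (v0L q) + v1L p * conj (v1L q)

/-- Fourfold tensor (Kronecker) product of `2 × 2` matrices, as a matrix on `Q4`. -/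
noncomputable def tens4 (A B C D : Matrix (Fin 2) (Fin 2) ℂ) : Matrix Q4 Q4 ℂ :=
  fun p q => A p.1 q.1 * B p.2.1 q.2.1 * C p.2.2.1 q.2.2.1 * D p.2.2.2 q.2.2.2

/-- The single-qubit Kraus operators of the state-transfer channel. -/
noncomputable def krausOp (f : ℂ) : Fin 2 → Matrix (Fin 2) (Fin 2) ℂ :=
  ![!![1, 0; 0, f], !![0, ((Real.sqrt (1 - ‖f‖ ^ 2) : ℝ) : ℂ); 0, 0]]

/-- The matrix `E^{⊗4}(P)`: the image of the code projector under the fourfold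
tensor power of the channel. -/
noncomputable def E4P (f : ℂ) : Matrix Q4 Q4 ℂ :=
  ∑ w : Q4,
    tens4 (krausOp f w.1) (krausOp f w.2.1) (krausOp f w.2.2.1) (krausOp f w.2.2.2)
      * projP *
    (tens4 (krausOp f w.1) (krausOp f w.2.1) (krausOp f w.2.2.1) (krausOp f w.2.2.2))ᴴ

/-- Expand the sandwich `A * P * Aᴴ` entrywise via the rank-one structure of `P`. -/
lemma sandwich_aux (A : Matrix Q4 Q4 ℂ) (p q : Q4) :
    (A * projP * Aᴴ) p q =
      (∑ r : Q4, A p r * v0L r) * conj (∑ s : Q4, A q s * v0L s) +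
      (∑ r : Q4, A p r * v1L r) * conj (∑ s : Q4, A q s * v1L s) := by
  rw [Matrix.mul_apply, map_sum, map_sum, Finset.sum_mul_sum, Finset.sum_mul_sum]
  simp only [Matrix.mul_apply, Matrix.conjTranspose_apply, projP, starRingEnd_apply,
    StarMul.star_mul, Finset.sum_mul, Finset.mul_sum]
  rw [← Finset.sum_add_distrib, Finset.sum_comm]
  apply Finset.sum_congr rfl
  intro s _
  rw [← Finset.sum_add_distrib]
  apply Finset.sum_congr rfl
  intro r _
  ring

lemma vec0_aux (A : Matrix Q4 Q4 ℂ) (p : Q4) :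
    ∑ r : Q4, A p r * v0L r =
      ((Real.sqrt 2 : ℂ))⁻¹ * (A p ((0:Fin 2),(0:Fin 2),(0:Fin 2),(0:Fin 2)) +
        A p ((1:Fin 2),(1:Fin 2),(1:Fin 2),(1:Fin 2))) := by
  simp only [v0L, mul_add, mul_ite, mul_one, mul_zero, Finset.sum_add_distrib,
    Finset.sum_ite_eq', Finset.mem_univ, if_true]
  ring

lemma vec1_aux (A : Matrix Q4 Q4 ℂ) (p : Q4) :
    ∑ r : Q4, A p r * v1L r =
      ((Real.sqrt 2 : ℂ))⁻¹ * (A p ((1:Fin 2),(1:Fin 2),(0:Fin 2),(0:Fin 2)) +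
        A p ((0:Fin 2),(0:Fin 2),(1:Fin 2),(1:Fin 2))) := by
  simp only [v1L, mul_add, mul_ite, mul_one, mul_zero, Finset.sum_add_distrib,
    Finset.sum_ite_eq', Finset.mem_univ, if_true]
  ring

/-- The per-qubit transfer coefficient `∑ w, ⟨a|E_w|r⟩ conj ⟨b|E_w|s⟩`. -/
noncomputable def Tm (f : ℂ) (r s a b : Fin 2) : ℂ :=
  ∑ w : Fin 2, krausOp f w a r * conj (krausOp f w b s)

lemma sqrt2_inv_sq : ((Real.sqrt 2 : ℂ))⁻¹ * ((Real.sqrt 2 : ℂ))⁻¹ = (2:ℂ)⁻¹ := by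
  have h : ((Real.sqrt 2 : ℝ) : ℂ) * ((Real.sqrt 2 : ℝ) : ℂ) = 2 := by
    norm_cast
    exact Real.mul_self_sqrt (by norm_num)
  rw [← mul_inv, h]

set_option maxHeartbeats 1000000 in
/-- Closed form for the entries of `E^{⊗4}(P)` in terms of per-qubit transfer sums. -/
lemma E4P_eq (f : ℂ) (p q : Q4) : E4P f p q = (2:ℂ)⁻¹ *
  ( Tm f 0 0 p.1 q.1 * Tm f 0 0 p.2.1 q.2.1 * Tm f 0 0 p.2.2.1 q.2.2.1 * Tm f 0 0 p.2.2.2 q.2.2.2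
  + Tm f 0 1 p.1 q.1 * Tm f 0 1 p.2.1 q.2.1 * Tm f 0 1 p.2.2.1 q.2.2.1 * Tm f 0 1 p.2.2.2 q.2.2.2
  + Tm f 1 0 p.1 q.1 * Tm f 1 0 p.2.1 q.2.1 * Tm f 1 0 p.2.2.1 q.2.2.1 * Tm f 1 0 p.2.2.2 q.2.2.2
  + Tm f 1 1 p.1 q.1 * Tm f 1 1 p.2.1 q.2.1 * Tm f 1 1 p.2.2.1 q.2.2.1 * Tm f 1 1 p.2.2.2 q.2.2.2
  + Tm f 1 1 p.1 q.1 * Tm f 1 1 p.2.1 q.2.1 * Tm f 0 0 p.2.2.1 q.2.2.1 * Tm f 0 0 p.2.2.2 q.2.2.2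
  + Tm f 1 0 p.1 q.1 * Tm f 1 0 p.2.1 q.2.1 * Tm f 0 1 p.2.2.1 q.2.2.1 * Tm f 0 1 p.2.2.2 q.2.2.2
  + Tm f 0 1 p.1 q.1 * Tm f 0 1 p.2.1 q.2.1 * Tm f 1 0 p.2.2.1 q.2.2.1 * Tm f 1 0 p.2.2.2 q.2.2.2
  + Tm f 0 0 p.1 q.1 * Tm f 0 0 p.2.1 q.2.1 * Tm f 1 1 p.2.2.1 q.2.2.1 * Tm f 1 1 p.2.2.2 q.2.2.2 ) := by
  obtain ⟨p1, p2, p3, p4⟩ := p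
  obtain ⟨q1, q2, q3, q4⟩ := q
  unfold E4P
  simp only [Matrix.sum_apply]
  simp only [sandwich_aux, vec0_aux, vec1_aux]
  simp only [_root_.map_mul, _root_.map_add, map_inv₀, Complex.conj_ofReal]
  simp only [Fintype.sum_prod_type, Fin.sum_univ_two]
  simp only [tens4, Tm, Fin.sum_univ_two, starRingEnd_apply, StarMul.star_mul]
  rw [show ((2:ℂ))⁻¹ = ((Real.sqrt 2 : ℂ))⁻¹ * ((Real.sqrt 2 : ℂ))⁻¹ from sqrt2_inv_sq.symm]
  ring

lemma Tm00 (f : ℂ) (a b : Fin 2) :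
    Tm f 0 0 a b = if a = 0 ∧ b = 0 then 1 else 0 := by
  fin_cases a <;> fin_cases b <;>
    simp [Tm, krausOp, Fin.sum_univ_two]

lemma Tm01 (f : ℂ) (a b : Fin 2) :
    Tm f 0 1 a b = if a = 0 ∧ b = 1 then conj f else 0 := by
  fin_cases a <;> fin_cases b <;>
    simp [Tm, krausOp, Fin.sum_univ_two]

lemma Tm10 (f : ℂ) (a b : Fin 2) :
    Tm f 1 0 a b = if a = 1 ∧ b = 0 then f else 0 := by
  fin_cases a <;> fin_cases b <;>
    simp [Tm, krausOp, Fin.sum_univ_two]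

lemma Tm11 (f : ℂ) (a b : Fin 2) :
    Tm f 1 1 a b = if a = 0 ∧ b = 0 then
        ((Real.sqrt (1 - ‖f‖ ^ 2) : ℝ) : ℂ) * ((Real.sqrt (1 - ‖f‖ ^ 2) : ℝ) : ℂ)
      else if a = 1 ∧ b = 1 then f * conj f else 0 := by
  fin_cases a <;> fin_cases b <;>
    simp [Tm, krausOp, Fin.sum_univ_two, mul_comm]

set_option maxHeartbeats 4000000 in

theorem E4P_structure (f : ℂ) (Θ : ℝ) (hf : ‖f‖ ≤ 1)
    (hfΘ : f = (‖f‖ : ℂ) * Complex.exp (Complex.I * Θ)) :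
    (∀ p q : Q4, p ≠ q →
      ¬(p = ((0 : Fin 2), (0 : Fin 2), (0 : Fin 2), (0 : Fin 2)) ∧
          q = ((1 : Fin 2), (1 : Fin 2), (1 : Fin 2), (1 : Fin 2))) →
      ¬(p = ((1 : Fin 2), (1 : Fin 2), (1 : Fin 2), (1 : Fin 2)) ∧
          q = ((0 : Fin 2), (0 : Fin 2), (0 : Fin 2), (0 : Fin 2))) →
      ¬(p = ((1 : Fin 2), (1 : Fin 2), (0 : Fin 2), (0 : Fin 2)) ∧
          q = ((0 : Fin 2), (0 : Fin 2), (1 : Fin 2), (1 : Fin 2))) →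
      ¬(p = ((0 : Fin 2), (0 : Fin 2), (1 : Fin 2), (1 : Fin 2)) ∧
          q = ((1 : Fin 2), (1 : Fin 2), (0 : Fin 2), (0 : Fin 2))) →
      E4P f p q = 0) ∧
    (∃ g : ℝ, 0 ≤ g ∧
      E4P f ((0 : Fin 2), (0 : Fin 2), (0 : Fin 2), (0 : Fin 2))
            ((1 : Fin 2), (1 : Fin 2), (1 : Fin 2), (1 : Fin 2)) =
        Complex.exp (-(4 * (Θ : ℂ)) * Complex.I) * (g : ℂ)) ∧
    (∃ h : ℝ,
      E4P f ((1 : Fin 2), (1 : Fin 2), (0 : Fin 2), (0 : Fin 2))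
            ((0 : Fin 2), (0 : Fin 2), (1 : Fin 2), (1 : Fin 2)) = (h : ℂ)) := by
  refine ⟨?_, ?_, ?_⟩
  · clear hf hfΘ
    rintro ⟨p1, p2, p3, p4⟩ ⟨q1, q2, q3, q4⟩ hne h1 h2 h3 h4
    rw [E4P_eq]
    fin_cases p1 <;> fin_cases p2 <;> fin_cases p3 <;> fin_cases p4 <;>
      fin_cases q1 <;> fin_cases q2 <;> fin_cases q3 <;> fin_cases q4 <;>
      simp_all [Tm00, Tm01, Tm10, Tm11]
  · refine ⟨‖f‖ ^ 4 / 2, by positivity, ?_⟩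
    have hval : E4P f ((0 : Fin 2), (0 : Fin 2), (0 : Fin 2), (0 : Fin 2))
        ((1 : Fin 2), (1 : Fin 2), (1 : Fin 2), (1 : Fin 2))
        = 2⁻¹ * (conj f) ^ 4 := by
      rw [E4P_eq]
      simp only [Tm00, Tm01, Tm10, Tm11]
      norm_num
      ring
    have hconj : conj f = (‖f‖ : ℂ) * Complex.exp (-(Complex.I * Θ)) := by
      conv_lhs => rw [hfΘ]
      rw [_root_.map_mul, ← Complex.exp_conj]
      simp [Complex.conj_ofReal]
    rw [hval, hconj,
      show (-(4 * (Θ:ℂ)) * Complex.I) = ((4:ℕ) : ℂ) * (-(Complex.I * Θ)) by push_cast; ring,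
      Complex.exp_nat_mul]
    push_cast
    ring
  · refine ⟨Complex.normSq f ^ 2 / 2, ?_⟩
    have hval : E4P f ((1 : Fin 2), (1 : Fin 2), (0 : Fin 2), (0 : Fin 2))
        ((0 : Fin 2), (0 : Fin 2), (1 : Fin 2), (1 : Fin 2))
        = 2⁻¹ * (f * conj f) ^ 2 := by
      rw [E4P_eq]
      simp only [Tm00, Tm01, Tm10, Tm11]
      norm_num
      ring
    rw [hval, Complex.mul_conj]
    push_cast
    ring
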